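/- Let G and H be finite groups with coprime orders, and let p = (g₁,h₁), q = (g₂,h₂) ∈ G × H. Then Σ_{G×H}(p,q) ∩ (G × {e}) = Σ_G(g₁,g₂) × {e} and Σ_{G×H}(p,q) ∩ ({e} × H) = {e} × Σ_H(h₁,h₂). -/
import Mathlib

def BSigma {G : Type*} [Group G] (x y : G) : Set G :=
  ⋃ k : G, (fun g => k⁻¹ * g * k) ''
    ((Subgroup.zpowers x : Set G) ∪ (Subgroup.zpowers y : Set G) ∪
      (Subgroup.zpowers (x * y) : Set G))

lemma mem_BSigma {G : Type*} [Group G] {x y a : G} :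
    a ∈ BSigma x y ↔
      ∃ k : G, ∃ z ∈ ({x, y, x * y} : Set G), ∃ n : ℤ, k⁻¹ * z ^ n * k = a := by
  unfold BSigma
  simp only [Set.mem_iUnion, Set.mem_image, Set.mem_union, SetLike.mem_coe,
    Subgroup.mem_zpowers_iff, Set.mem_insert_iff, Set.mem_singleton_iff]
  constructor
  · rintro ⟨k, g, ((⟨n, rfl⟩ | ⟨n, rfl⟩) | ⟨n, rfl⟩), rfl⟩
    · exact ⟨k, x, Or.inl rfl, n, rfl⟩
    · exact ⟨k, y, Or.inr (Or.inl rfl), n, rfl⟩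
    · exact ⟨k, x * y, Or.inr (Or.inr rfl), n, rfl⟩
  · rintro ⟨k, z, (rfl | rfl | rfl), n, rfl⟩
    · exact ⟨k, _, Or.inl (Or.inl ⟨n, rfl⟩), rfl⟩
    · exact ⟨k, _, Or.inl (Or.inr ⟨n, rfl⟩), rfl⟩
    · exact ⟨k, _, Or.inr ⟨n, rfl⟩, rfl⟩

lemma exists_pow_eq {G H : Type*} [Group G] [Group H] [Finite G] [Finite H]
    (hco : Nat.Coprime (Nat.card G) (Nat.card H)) (x : G) (y : H) (n : ℤ) :
    ∃ m : ℤ, x ^ m = x ^ n ∧ y ^ m = 1 := by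
  obtain ⟨u, v, huv⟩ := Nat.isCoprime_iff_coprime.mpr hco
  refine ⟨n * (v * (Nat.card H : ℤ)), ?_, ?_⟩
  · have hx : x ^ (Nat.card G : ℤ) = 1 := by
      rw [zpow_natCast, pow_card_eq_one']
    have : n * (v * (Nat.card H : ℤ)) = n - (n * u) * (Nat.card G : ℤ) := by
      linear_combination n * huv
    rw [this, zpow_sub, mul_comm (n * u), zpow_mul, hx, one_zpow, inv_one, mul_one]
  · have hy : y ^ (Nat.card H : ℤ) = 1 := by
      rw [zpow_natCast, pow_card_eq_one']
    have : n * (v * (Nat.card H : ℤ)) = (Nat.card H : ℤ) * (n * v) := by ring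
    rw [this, zpow_mul, hy, one_zpow]

lemma inter_snd {G H : Type*} [Group G] [Group H] [Finite G] [Finite H]
    (hco : Nat.Coprime (Nat.card G) (Nat.card H))
    (g₁ g₂ : G) (h₁ h₂ : H) :
    BSigma (g₁, h₁) (g₂, h₂) ∩ {p : G × H | p.2 = 1}
        = (fun g => ((g, 1) : G × H)) '' BSigma g₁ g₂ := by
  ext p
  simp only [Set.mem_inter_iff, Set.mem_setOf_eq, Set.mem_image, mem_BSigma]
  constructor
  · rintro ⟨⟨k, z, hz, n, hzn⟩, hp2⟩
    refine ⟨p.1, ⟨k.1, z.1, ?_, n, ?_⟩, Prod.ext rfl hp2.symm⟩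
    · rcases hz with rfl | rfl | rfl
      · exact Or.inl rfl
      · exact Or.inr (Or.inl rfl)
      · exact Or.inr (Or.inr rfl)
    · have := congrArg Prod.fst hzn
      simpa using this
  · rintro ⟨a, ⟨k, z, hz, n, hzn⟩, rfl⟩
    have key : ∀ w : H, ((z, w) : G × H) ∈ ({(g₁, h₁), (g₂, h₂), (g₁, h₁) * (g₂, h₂)} : Set (G × H)) →
        (∃ k' : G × H, ∃ z' ∈ ({(g₁, h₁), (g₂, h₂), (g₁, h₁) * (g₂, h₂)} : Set (G × H)),
          ∃ m : ℤ, k'⁻¹ * z' ^ m * k' = (a, 1)) := by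
      intro w hw
      obtain ⟨m, hm1, hm2⟩ := exists_pow_eq hco z w n
      refine ⟨(k, 1), (z, w), hw, m, ?_⟩
      rw [Prod.ext_iff]
      constructor
      · simpa [hm1] using hzn
      · simp [hm2]
    rcases hz with rfl | rfl | rfl
    · exact ⟨key h₁ (Or.inl rfl), rfl⟩
    · exact ⟨key h₂ (Or.inr (Or.inl rfl)), rfl⟩
    · exact ⟨key (h₁ * h₂) (Or.inr (Or.inr rfl)), rfl⟩

theorem stmt11 {G H : Type*} [Group G] [Group H] [Finite G] [Finite H]
    (hco : Nat.Coprime (Nat.card G) (Nat.card H))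
    (g₁ g₂ : G) (h₁ h₂ : H) :
    BSigma (g₁, h₁) (g₂, h₂) ∩ {p : G × H | p.2 = 1}
        = (fun g => ((g, 1) : G × H)) '' BSigma g₁ g₂ ∧
    BSigma (g₁, h₁) (g₂, h₂) ∩ {p : G × H | p.1 = 1}
        = (fun h => ((1, h) : G × H)) '' BSigma h₁ h₂ := by
  refine ⟨inter_snd hco g₁ g₂ h₁ h₂, ?_⟩
  ext p
  simp only [Set.mem_inter_iff, Set.mem_setOf_eq, Set.mem_image, mem_BSigma]
  constructor
  · rintro ⟨⟨k, z, hz, n, hzn⟩, hp1⟩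
    refine ⟨p.2, ⟨k.2, z.2, ?_, n, ?_⟩, Prod.ext hp1.symm rfl⟩
    · rcases hz with rfl | rfl | rfl
      · exact Or.inl rfl
      · exact Or.inr (Or.inl rfl)
      · exact Or.inr (Or.inr rfl)
    · have := congrArg Prod.snd hzn
      simpa using this
  · rintro ⟨a, ⟨k, z, hz, n, hzn⟩, rfl⟩
    have key : ∀ w : G, ((w, z) : G × H) ∈ ({(g₁, h₁), (g₂, h₂), (g₁, h₁) * (g₂, h₂)} : Set (G × H)) →
        (∃ k' : G × H, ∃ z' ∈ ({(g₁, h₁), (g₂, h₂), (g₁, h₁) * (g₂, h₂)} : Set (G × H)),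
          ∃ m : ℤ, k'⁻¹ * z' ^ m * k' = (1, a)) := by
      intro w hw
      obtain ⟨m, hm1, hm2⟩ := exists_pow_eq hco.symm z w n
      refine ⟨(1, k), (w, z), hw, m, ?_⟩
      rw [Prod.ext_iff]
      constructor
      · simp [hm2]
      · simpa [hm1] using hzn
    rcases hz with rfl | rfl | rfl
    · exact ⟨key g₁ (Or.inl rfl), rfl⟩
    · exact ⟨key g₂ (Or.inr (Or.inl rfl)), rfl⟩
    · exact ⟨key (g₁ * g₂) (Or.inr (Or.inr rfl)), rfl⟩
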